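/- Let M be a unitary magma. The fundamental (set-theoretic) basis of the clique operad CM is basic — i.e., for every clique q and index i, the map p ↦ p ∘_i q is injective — if and only if M is right cancellable. -/
import Mathlib


/-- The partial composition `p ∘_i q` of the clique operad `C M` over a unitary
magma `M`, on cliques encoded as functions `ℕ → ℕ → M` (the relevant values of a
clique of arity `n` being on the arcs `(x, y)` with `1 ≤ x < y ≤ n + 1`). -/
def cliqComp {M : Type*} [Mul M] [One M] (i m : ℕ) (p q : ℕ → ℕ → M) :
    ℕ → ℕ → M := fun x y =>
  if y ≤ i then p x y
  else if x ≤ i ∧ i < i + m ∧ i + m ≤ y ∧ ¬(x = i ∧ y = i + m) then p x (y - m + 1)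
  else if i + m ≤ x then p (x - m + 1) (y - m + 1)
  else if i ≤ x ∧ x < y ∧ y ≤ i + m ∧ ¬(x = i ∧ y = i + m) then q (x - i + 1) (y - i + 1)
  else if x = i ∧ y = i + m then p i (i + 1) * q 1 (m + 1)
  else 1

/-- The fundamental set-theoretic basis of the clique operad `C M` is basic —
i.e., for every clique `q` of arity `m` and index `i ∈ [n]`, the map
`p ↦ p ∘_i q` on cliques of arity `n` is injective (cliques being identified
when they agree on all the arcs of their domain) — if and only if the unitary
magma `M` is right cancellable. -/
theorem basic_iff_right_cancellable (M : Type) [MulOneClass M] :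
    (∀ n m i : ℕ, 1 ≤ n → 1 ≤ m → 1 ≤ i → i ≤ n →
      ∀ p p' q : ℕ → ℕ → M,
        (∀ a b : ℕ, 1 ≤ a → a < b → b ≤ n + m →
          cliqComp i m p q a b = cliqComp i m p' q a b) →
        (∀ a b : ℕ, 1 ≤ a → a < b → b ≤ n + 1 → p a b = p' a b)) ↔
    (∀ x y z : M, y * x = z * x → y = z) := by
  constructor
  · intro H x y z hxy
    refine H 1 1 1 le_rfl le_rfl le_rfl le_rfl (fun _ _ => y) (fun _ _ => z)
      (fun _ _ => x) ?_ 1 2 le_rfl (by norm_num) (by norm_num)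
    intro a b ha hab hb
    have ha' : a = 1 := by omega
    have hb' : b = 2 := by omega
    subst ha' hb'
    simp only [cliqComp]
    split_ifs <;> first | omega | tauto | exact hxy | tauto
  · intro hc n m i hn hm hi hin p p' q h a b ha hab hb
    by_cases hbi : b ≤ i
    · have hy := h a b ha hab (by omega)
      simp only [cliqComp] at hy
      split_ifs at hy <;> first | omega | tauto | exact hy
    · by_cases hai : a ≤ i
      · by_cases hsp : a = i ∧ b = i + 1
        · obtain ⟨rfl, rfl⟩ := hsp
          have hy := h a (a + m) hi (by omega) (by omega)
          simp only [cliqComp] at hy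
          split_ifs at hy <;> first | omega | tauto | exact hc _ _ _ hy
        · have hy := h a (b + m - 1) ha (by omega) (by omega)
          simp only [cliqComp] at hy
          have e : b + m - 1 - m + 1 = b := by omega
          split_ifs at hy <;> first | omega | tauto | (rw [e] at hy; exact hy)
      · have hy := h (a + m - 1) (b + m - 1) (by omega) (by omega) (by omega)
        simp only [cliqComp] at hy
        have e1 : a + m - 1 - m + 1 = a := by omega
        have e2 : b + m - 1 - m + 1 = b := by omega
        split_ifs at hy <;> first | omega | tauto | (rw [e1, e2] at hy; exact hy)
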